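/- Let Δ be strictly causal on ℓⁿ and suppose for some ρ > 0 and 0 ≤ γ < 1 it holds that ‖Δ(x)‖_p ≤ γ‖x‖_p for all x with ‖x‖_p < ρ. Then the operator (I - Δ)⁻¹ is continuous at 0 as a map ℓⁿ_p → ℓⁿ_p: for every ε > 0 there exists δ > 0 such that ‖w‖_p < δ implies ‖(I - Δ)⁻¹(w)‖_p < ε. -/

import Mathlib

open scoped ENNReal NNReal

/-- The ℓ_p norm of a sequence, valued in `ℝ≥0∞` (sup norm for `p = ∞`). -/
noncomputable def pNorm (p : ℝ≥0∞) {E : Type*} [NormedAddCommGroup E] (x : ℕ → E) : ℝ≥0∞ :=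
  if p = ∞ then ⨆ k, (‖x k‖₊ : ℝ≥0∞)
  else (∑' k, (‖x k‖₊ : ℝ≥0∞) ^ p.toReal) ^ (1 / p.toReal)

/-- A strictly causal operator: the t-th output depends only on inputs 0..t-1. -/
def StrictlyCausal {E F : Type*} (Q : (ℕ → E) → (ℕ → F)) : Prop :=
  ∀ x y : ℕ → E, ∀ t, (∀ s, s < t → x s = y s) → Q x t = Q y t

open MeasureTheory

section aux
variable {E : Type*} [NormedAddCommGroup E]

lemma pNorm_mono (p : ℝ≥0∞) {x y : ℕ → E} (h : ∀ k, ‖x k‖₊ ≤ ‖y k‖₊) :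
    pNorm p x ≤ pNorm p y := by
  unfold pNorm
  split
  · exact iSup_mono fun k => by exact_mod_cast h k
  · refine ENNReal.rpow_le_rpow (ENNReal.tsum_le_tsum fun k => ?_) (by positivity)
    exact ENNReal.rpow_le_rpow (by exact_mod_cast h k) ENNReal.toReal_nonneg

lemma pNorm_add_le (p : ℝ≥0∞) (hp : 1 ≤ p) (x y : ℕ → E) :
    pNorm p (fun k => x k + y k) ≤ pNorm p x + pNorm p y := by
  unfold pNorm
  split
  · refine iSup_le fun k => ?_
    calc (‖x k + y k‖₊ : ℝ≥0∞) ≤ (‖x k‖₊ : ℝ≥0∞) + ‖y k‖₊ := by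
          exact_mod_cast nnnorm_add_le _ _
      _ ≤ _ := add_le_add (le_iSup (fun j => (‖x j‖₊ : ℝ≥0∞)) k) (le_iSup (fun j => (‖y j‖₊ : ℝ≥0∞)) k)
  · rename_i hne
    have hq : 1 ≤ p.toReal := by
      have := ENNReal.toReal_mono hne hp
      simpa using this
    calc (∑' k, (‖x k + y k‖₊ : ℝ≥0∞) ^ p.toReal) ^ (1 / p.toReal)
        ≤ (∑' k, ((fun k => (‖x k‖₊ : ℝ≥0∞)) + fun k => (‖y k‖₊ : ℝ≥0∞)) k ^ p.toReal) ^ (1 / p.toReal) := by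
          refine ENNReal.rpow_le_rpow (ENNReal.tsum_le_tsum fun k => ?_) (by positivity)
          refine ENNReal.rpow_le_rpow ?_ (by linarith)
          show (‖x k + y k‖₊ : ℝ≥0∞) ≤ (‖x k‖₊ : ℝ≥0∞) + (‖y k‖₊ : ℝ≥0∞)
          exact_mod_cast nnnorm_add_le _ _
      _ ≤ _ := by
          have := ENNReal.lintegral_Lp_add_le (μ := Measure.count)
            (f := fun k : ℕ => (‖x k‖₊ : ℝ≥0∞)) (g := fun k : ℕ => (‖y k‖₊ : ℝ≥0∞))
            (measurable_of_countable _).aemeasurable (measurable_of_countable _).aemeasurable hq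
          simpa [lintegral_count] using this

/-- truncation -/
def trunc (T : ℕ) (x : ℕ → E) : ℕ → E := fun k => if k < T then x k else 0

lemma pNorm_trunc_zero (p : ℝ≥0∞) (hp : 1 ≤ p) (x : ℕ → E) : pNorm p (trunc 0 x) = 0 := by
  unfold pNorm trunc
  split
  · simp
  · rename_i hne
    have hq0 : 0 < p.toReal := by
      have := ENNReal.toReal_mono hne hp
      simp at this; linarith
    simp only [Nat.not_lt_zero, if_false]
    simp [ENNReal.zero_rpow_of_pos, hq0, one_div, inv_pos]

lemma pNorm_le_of_trunc (p : ℝ≥0∞) (hp : 1 ≤ p) {x : ℕ → E} {r : ℝ≥0∞}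
    (h : ∀ T, pNorm p (trunc T x) ≤ r) : pNorm p x ≤ r := by
  unfold pNorm at *
  split
  · rename_i hinf
    refine iSup_le fun k => ?_
    have := h (k + 1)
    rw [if_pos hinf] at this
    refine le_trans ?_ this
    have : (‖x k‖₊ : ℝ≥0∞) = ‖trunc (k+1) x k‖₊ := by simp [trunc]
    rw [this]
    exact le_iSup (fun j => (‖trunc (k+1) x j‖₊ : ℝ≥0∞)) k
  · rename_i hne
    have hq0 : 0 < p.toReal := by
      have := ENNReal.toReal_mono hne hp
      simp at this; linarith
    rw [← ENNReal.rpow_le_rpow_iff hq0, ← ENNReal.rpow_mul,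
      one_div, inv_mul_cancel₀ hq0.ne', ENNReal.rpow_one]
    rw [ENNReal.tsum_eq_iSup_sum]
    refine iSup_le fun s => ?_
    obtain ⟨T, hT⟩ : ∃ T, s ⊆ Finset.range T := ⟨(s.sup id) + 1, fun i hi =>
      Finset.mem_range.2 (Nat.lt_succ_of_le (Finset.le_sup (f := id) hi))⟩
    calc ∑ k ∈ s, (‖x k‖₊ : ℝ≥0∞) ^ p.toReal
        ≤ ∑ k ∈ Finset.range T, (‖x k‖₊ : ℝ≥0∞) ^ p.toReal :=
          Finset.sum_le_sum_of_subset hT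
      _ = ∑' k, (‖trunc T x k‖₊ : ℝ≥0∞) ^ p.toReal := by
          rw [tsum_eq_sum (s := Finset.range T) (fun k hk => by
            have : ¬ k < T := fun h => hk (Finset.mem_range.2 h)
            simp [trunc, this, ENNReal.zero_rpow_of_pos hq0])]
          refine Finset.sum_congr rfl fun k hk => ?_
          have : k < T := Finset.mem_range.1 hk
          simp [trunc, this]
      _ ≤ r ^ p.toReal := by
          have := h T
          rw [if_neg hne] at this
          have := ENNReal.rpow_le_rpow this hq0.le
          rwa [← ENNReal.rpow_mul, one_div, inv_mul_cancel₀ hq0.ne', ENNReal.rpow_one] at this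

end aux

section aux2
variable {E : Type*} [NormedAddCommGroup E]

lemma pNorm_trunc_le (p : ℝ≥0∞) (T : ℕ) (x : ℕ → E) :
    pNorm p (trunc T x) ≤ pNorm p x := by
  refine pNorm_mono p fun k => ?_
  by_cases h : k < T <;> simp [trunc, h]

end aux2

/-- if `Δ` is strictly causal with `‖Δ(x)‖_p ≤ γ‖x‖_p` for `‖x‖_p < ρ`,
`0 ≤ γ < 1`, `ρ > 0`, then `(I - Δ)⁻¹` is continuous at `0`: for every `ε > 0` there is
`δ > 0` such that `‖w‖_p < δ` implies that every solution `y` of `y = Δ(y) + w` satisfies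
`‖y‖_p < ε`. -/
theorem small_gain_continuity_at_zero {E : Type*} [NormedAddCommGroup E]
    (p : ℝ≥0∞) (hp : 1 ≤ p)
    (Δ : (ℕ → E) → (ℕ → E)) (hΔc : StrictlyCausal Δ)
    (ρ : ℝ≥0∞) (hρ : 0 < ρ)
    (γ : ℝ≥0) (hγ : γ < 1)
    (hΔ : ∀ x : ℕ → E, pNorm p x < ρ → pNorm p (Δ x) ≤ γ * pNorm p x) :
    ∀ ε : ℝ≥0∞, 0 < ε → ∃ δ : ℝ≥0∞, 0 < δ ∧
      ∀ (w y : ℕ → E), (∀ t, y t = Δ y t + w t) → pNorm p w < δ → pNorm p y < ε := by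
  intro ε hε
  set m : ℝ≥0∞ := min (min ε ρ) 1 with hm
  have hm0 : 0 < m := by
    simp [hm, hε, hρ]
  have hm1 : m ≤ 1 := min_le_right _ _
  have hmtop : m ≠ ∞ := fun h => by simp [h] at hm1
  set r : ℝ≥0∞ := m / 2 with hr
  have hrm : r < m := ENNReal.half_lt_self hm0.ne' hmtop
  have hrε : r < ε := hrm.trans_le ((min_le_left _ _).trans (min_le_left _ _))
  have hrρ : r < ρ := hrm.trans_le ((min_le_left _ _).trans (min_le_right _ _))
  have hr0 : 0 < r := ENNReal.half_pos hm0.ne'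
  have hrtop : r ≠ ∞ := ne_top_of_le_ne_top ENNReal.one_ne_top (hrm.le.trans hm1)
  refine ⟨((1 - γ : ℝ≥0) : ℝ≥0∞) * r, ?_, ?_⟩
  · exact ENNReal.mul_pos (by exact_mod_cast (tsub_pos_of_lt hγ).ne') hr0.ne'
  intro w y hy hw
  have key : ∀ T, pNorm p (trunc T y) ≤ r := by
    intro T
    induction T with
    | zero => rw [pNorm_trunc_zero p hp]; exact hr0.le
    | succ T ih =>
      set z := trunc T y with hz
      have heq : trunc (T + 1) y = trunc (T + 1) (fun t => Δ z t + w t) := by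
        funext k
        by_cases hk : k < T + 1
        · have hΔeq : Δ y k = Δ z k := by
            refine hΔc y z k fun s hs => ?_
            have : s < T := lt_of_lt_of_le hs (Nat.lt_succ_iff.1 hk)
            simp [hz, trunc, this]
          simp only [trunc, if_pos hk]
          rw [hy k, hΔeq]
        · simp [trunc, hk]
      have hzρ : pNorm p z < ρ := lt_of_le_of_lt ih hrρ
      have step : pNorm p (trunc (T + 1) y) ≤ (γ : ℝ≥0∞) * r + pNorm p w := by
        rw [heq]
        calc pNorm p (trunc (T + 1) (fun t => Δ z t + w t))
            ≤ pNorm p (fun t => Δ z t + w t) := pNorm_trunc_le p _ _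
          _ ≤ pNorm p (Δ z) + pNorm p w := pNorm_add_le p hp _ _
          _ ≤ (γ : ℝ≥0∞) * pNorm p z + pNorm p w := add_le_add_left (hΔ z hzρ) _
          _ ≤ (γ : ℝ≥0∞) * r + pNorm p w :=
              add_le_add_left (mul_le_mul_right ih _) _
      have hlt : (γ : ℝ≥0∞) * r + pNorm p w < r := by
        have h1 : (γ : ℝ≥0∞) * r + pNorm p w < (γ : ℝ≥0∞) * r + ((1 - γ : ℝ≥0) : ℝ≥0∞) * r :=
          ENNReal.add_lt_add_left (ENNReal.mul_ne_top ENNReal.coe_ne_top hrtop) hw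
        have h2 : (γ : ℝ≥0∞) * r + ((1 - γ : ℝ≥0) : ℝ≥0∞) * r = r := by
          rw [← add_mul, ← ENNReal.coe_add, add_tsub_cancel_of_le hγ.le]
          simp
        rwa [h2] at h1
      exact step.trans hlt.le
  exact lt_of_le_of_lt (pNorm_le_of_trunc p hp key) hrε
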